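/- Under the Gaussian reference measure ν = N(m, Σ) on ℝ^s and squared Euclidean transport cost c(x,y) = ‖x−y‖², with empirical center P̂_n = (1/n)Σᵢ δ_{ξ̂ᵢ}, the feasibility condition ρ + ε·E_{ξ∼P̂_n}[log E_{z∼ν}[e^{−‖ξ−z‖²/ε}]] ≥ 0 is equivalent to ρ ≥ (ε/2)·log det(Σ + (ε/2)I) − (εs/2)·log(ε/2) + (ε/2)‖m‖²_{Σ⁻¹} + (1/n)Σᵢ [ ‖ξ̂ᵢ‖² − (ξ̂ᵢ + (ε/2)Σ⁻¹m)ᵀ (I + (ε/2)Σ⁻¹)⁻¹ (ξ̂ᵢ + (ε/2)Σ⁻¹m) ]. -/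

import Mathlib

open MeasureTheory Matrix Real

lemma gauss_pi (s : ℕ) :
    ∫ u : Fin s → ℝ, Real.exp (-(1/2) * (u ⬝ᵥ u)) = Real.sqrt (2 * π) ^ s := by
  have h : ∀ u : Fin s → ℝ, Real.exp (-(1/2) * (u ⬝ᵥ u))
      = ∏ i : Fin s, Real.exp (-(1/2) * (u i) ^ 2) := by
    intro u
    rw [← Real.exp_sum, dotProduct, Finset.mul_sum]
    congr 1
    refine Finset.sum_congr rfl fun i _ => by ring
  simp_rw [h]
  rw [MeasureTheory.integral_fintype_prod_volume_eq_prod (ι := Fin s)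
    (fun _ => fun x : ℝ => Real.exp (-(1/2) * x ^ 2)), Finset.prod_const, Finset.card_univ,
    Fintype.card_fin]
  congr 1
  have := integral_gaussian (1/2)
  simp_rw [neg_mul] at this ⊢
  rw [this, show π / (1/2) = 2 * π by ring]

lemma cov (s : ℕ) (B : Matrix (Fin s) (Fin s) ℝ) (hB : B.det ≠ 0) (f : (Fin s → ℝ) → ℝ) :
    ∫ z : Fin s → ℝ, f (B.mulVec z) = |B.det|⁻¹ * ∫ u : Fin s → ℝ, f u := by
  have hBinv : Invertible B := B.invertibleOfIsUnitDet (isUnit_iff_ne_zero.2 hB)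
  let e := B.toLinearEquiv' hBinv
  have hcoe : ⇑(Matrix.toLin' B) = ⇑e := rfl
  have he : MeasurableEmbedding (⇑(Matrix.toLin' B)) := by
    rw [hcoe]
    exact e.toContinuousLinearEquiv.toHomeomorph.measurableEmbedding
  have hmap := Real.map_matrix_volume_pi_eq_smul_volume_pi (M := B) hB
  calc ∫ z : Fin s → ℝ, f (B.mulVec z)
      = ∫ z : Fin s → ℝ, f (Matrix.toLin' B z) := by simp [Matrix.toLin'_apply]
    _ = ∫ u, f u ∂(Measure.map (⇑(Matrix.toLin' B)) volume) := (he.integral_map f).symm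
    _ = ∫ u, f u ∂(ENNReal.ofReal |B.det⁻¹| • volume) := by rw [hmap]
    _ = |B.det|⁻¹ * ∫ u : Fin s → ℝ, f u := by
        rw [integral_smul_measure, ENNReal.toReal_ofReal (abs_nonneg _)]
        simp [abs_inv]

open scoped MatrixOrder in
lemma gauss_quad (s : ℕ) (A : Matrix (Fin s) (Fin s) ℝ) (hA : A.PosDef) :
    ∫ z : Fin s → ℝ, Real.exp (-(1/2) * (z ⬝ᵥ A.mulVec z))
      = Real.sqrt (2 * π) ^ s / Real.sqrt A.det := by
  set B := CFC.sqrt A with hBdef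
  have hBB : B * B = A := CFC.sqrt_mul_sqrt_self A (Matrix.nonneg_iff_posSemidef.2 hA.posSemidef)
  have hBsymm : Bᵀ = B := by
    have := (Matrix.nonneg_iff_posSemidef.1 (CFC.sqrt_nonneg A)).isHermitian
    simpa [Matrix.IsHermitian] using this
  have hdet2 : B.det * B.det = A.det := by rw [← Matrix.det_mul, hBB]
  have hAdetpos : 0 < A.det := hA.det_pos
  have hBdet : B.det ≠ 0 := by
    intro h; rw [h, mul_zero] at hdet2; exact hAdetpos.ne' hdet2.symm
  have habs : |B.det| = Real.sqrt A.det := by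
    rw [← hdet2, ← sq, Real.sqrt_sq_eq_abs]
  have hquad : ∀ z : Fin s → ℝ, z ⬝ᵥ A.mulVec z = (B.mulVec z) ⬝ᵥ (B.mulVec z) := by
    intro z
    rw [← hBB, ← Matrix.mulVec_mulVec, Matrix.dotProduct_mulVec z B, ← Matrix.mulVec_transpose,
      hBsymm]
  calc ∫ z : Fin s → ℝ, Real.exp (-(1/2) * (z ⬝ᵥ A.mulVec z))
      = ∫ z : Fin s → ℝ, (fun u => Real.exp (-(1/2) * (u ⬝ᵥ u))) (B.mulVec z) := by
        simp_rw [hquad]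
    _ = |B.det|⁻¹ * ∫ u : Fin s → ℝ, Real.exp (-(1/2) * (u ⬝ᵥ u)) :=
        cov s B hBdet (fun u => Real.exp (-(1/2) * (u ⬝ᵥ u)))
    _ = Real.sqrt (2 * π) ^ s / Real.sqrt A.det := by
        rw [gauss_pi, habs, inv_mul_eq_div]

lemma smul_posSemidef {s : ℕ} {A : Matrix (Fin s) (Fin s) ℝ} (hA : A.PosSemidef) {c : ℝ}
    (hc : 0 ≤ c) : (c • A).PosSemidef := by
  refine ⟨?_, fun x => ?_⟩
  · unfold Matrix.IsHermitian
    rw [Matrix.conjTranspose_smul, hA.1]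
    simp
  · exact (hA.smul hc).2 x

lemma dot_symm {s : ℕ} {A : Matrix (Fin s) (Fin s) ℝ} (h : Aᵀ = A) (a b : Fin s → ℝ) :
    a ⬝ᵥ A.mulVec b = b ⬝ᵥ A.mulVec a := by
  rw [Matrix.dotProduct_mulVec, ← Matrix.mulVec_transpose, h, dotProduct_comm]

lemma quad_expand {s : ℕ} (A : Matrix (Fin s) (Fin s) ℝ) (hA : Aᵀ = A) (z w : Fin s → ℝ) :
    (z - w) ⬝ᵥ A.mulVec (z - w)
      = z ⬝ᵥ A.mulVec z - 2 * (z ⬝ᵥ A.mulVec w) + w ⬝ᵥ A.mulVec w := by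
  rw [Matrix.mulVec_sub, sub_dotProduct, dotProduct_sub, dotProduct_sub,
    dot_symm hA w z]
  ring

lemma dot_sub_sub {s : ℕ} (x z : Fin s → ℝ) :
    (x - z) ⬝ᵥ (x - z) = x ⬝ᵥ x - 2 * (z ⬝ᵥ x) + z ⬝ᵥ z := by
  rw [sub_dotProduct, dotProduct_sub, dotProduct_sub,
    dotProduct_comm x z]
  ring

lemma inner_log {s : ℕ} (S : Matrix (Fin s) (Fin s) ℝ) (hS : S.PosDef) (hSs : S.IsSymm)
    (m : Fin s → ℝ) {ε : ℝ} (hε : 0 < ε) (x : Fin s → ℝ) :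
    Real.log (∫ z : Fin s → ℝ,
        Real.exp (-((x - z) ⬝ᵥ (x - z)) / ε) *
          ((Real.sqrt ((2 * π) ^ s * S.det))⁻¹ *
            Real.exp (-(1/2) * ((z - m) ⬝ᵥ S⁻¹.mulVec (z - m)))))
    = (s / 2 : ℝ) * Real.log (ε / 2)
      - (1/2) * Real.log ((S + (ε / 2) • (1 : Matrix (Fin s) (Fin s) ℝ)).det)
      + (1/ε) * ((x + (ε / 2) • S⁻¹.mulVec m) ⬝ᵥ
          (((1 : Matrix (Fin s) (Fin s) ℝ) + (ε / 2) • S⁻¹)⁻¹).mulVec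
            (x + (ε / 2) • S⁻¹.mulVec m))
      - (1/ε) * (x ⬝ᵥ x) - (1/2) * (m ⬝ᵥ S⁻¹.mulVec m) := by
  have hε2 : (0:ℝ) < ε / 2 := by positivity
  have hSdet : 0 < S.det := hS.det_pos
  have hSi : S⁻¹.PosDef := hS.inv
  have hSit : S⁻¹ᵀ = S⁻¹ := by rw [Matrix.transpose_nonsing_inv, hSs]
  set M : Matrix (Fin s) (Fin s) ℝ := 1 + (ε / 2) • S⁻¹ with hM
  set v : Fin s → ℝ := x + (ε / 2) • S⁻¹.mulVec m with hv
  set A : Matrix (Fin s) (Fin s) ℝ := S⁻¹ + (2/ε) • 1 with hA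
  have hMpos : M.PosDef :=
    Matrix.PosDef.add_posSemidef Matrix.PosDef.one (smul_posSemidef hSi.posSemidef hε2.le)
  have hApos : A.PosDef := by
    refine Matrix.PosDef.add_posSemidef hSi ?_
    rw [Matrix.smul_one_eq_diagonal]
    exact Matrix.PosSemidef.diagonal (fun i => by positivity)
  have hAt : Aᵀ = A := by
    rw [hA, Matrix.transpose_add, hSit, Matrix.transpose_smul, Matrix.transpose_one]
  have hMdet : IsUnit M.det := isUnit_iff_ne_zero.2 hMpos.det_pos.ne'
  set μ : Fin s → ℝ := (M⁻¹).mulVec v with hμ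
  have hAM : A = (2/ε) • M := by
    rw [hM, smul_add, smul_smul, show (2/ε) * (ε/2) = 1 by field_simp, one_smul, add_comm]
  have hAμ : A.mulVec μ = (2/ε) • v := by
    rw [hAM, Matrix.smul_mulVec, hμ, Matrix.mulVec_mulVec,
      Matrix.mul_nonsing_inv _ hMdet, Matrix.one_mulVec]
  set q : ℝ := v ⬝ᵥ (M⁻¹).mulVec v with hq
  set K : ℝ := (1/ε) * q - (1/ε) * (x ⬝ᵥ x) - (1/2) * (m ⬝ᵥ S⁻¹.mulVec m) with hK
  set C0 : ℝ := (Real.sqrt ((2 * π) ^ s * S.det))⁻¹ with hC0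
  have hpi : (0:ℝ) < 2 * π := by positivity
  have hC0pos : 0 < C0 := by
    rw [hC0]
    exact inv_pos.2 (Real.sqrt_pos.2 (by positivity))
  have hpt : ∀ z : Fin s → ℝ,
      Real.exp (-((x - z) ⬝ᵥ (x - z)) / ε) *
          (C0 * Real.exp (-(1/2) * ((z - m) ⬝ᵥ S⁻¹.mulVec (z - m))))
      = (C0 * Real.exp K) * Real.exp (-(1/2) * ((z - μ) ⬝ᵥ A.mulVec (z - μ))) := by
    intro z
    have hexp : -((x - z) ⬝ᵥ (x - z)) / ε + (-(1/2) * ((z - m) ⬝ᵥ S⁻¹.mulVec (z - m)))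
        = K + (-(1/2) * ((z - μ) ⬝ᵥ A.mulVec (z - μ))) := by
      have e4 : z ⬝ᵥ A.mulVec z = z ⬝ᵥ S⁻¹.mulVec z + (2/ε) * (z ⬝ᵥ z) := by
        rw [hA, Matrix.add_mulVec, dotProduct_add, Matrix.smul_mulVec,
          Matrix.one_mulVec, dotProduct_smul, smul_eq_mul]
      have e5 : z ⬝ᵥ A.mulVec μ = (2/ε) * (z ⬝ᵥ x) + z ⬝ᵥ S⁻¹.mulVec m := by
        rw [hAμ, dotProduct_smul, smul_eq_mul, hv, dotProduct_add,
          dotProduct_smul, smul_eq_mul]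
        field_simp
      have e6 : μ ⬝ᵥ A.mulVec μ = (2/ε) * q := by
        rw [hAμ, dotProduct_smul, smul_eq_mul, dotProduct_comm, hμ, ← hq]
      rw [dot_sub_sub x z, quad_expand S⁻¹ hSit z m, quad_expand A hAt z μ, e4, e5, e6, hK]
      field_simp
      ring
    calc Real.exp (-((x - z) ⬝ᵥ (x - z)) / ε) *
          (C0 * Real.exp (-(1/2) * ((z - m) ⬝ᵥ S⁻¹.mulVec (z - m))))
        = C0 * Real.exp (-((x - z) ⬝ᵥ (x - z)) / ε +
            (-(1/2) * ((z - m) ⬝ᵥ S⁻¹.mulVec (z - m)))) := by rw [Real.exp_add]; ring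
      _ = C0 * Real.exp (K + (-(1/2) * ((z - μ) ⬝ᵥ A.mulVec (z - μ)))) := by rw [hexp]
      _ = (C0 * Real.exp K) * Real.exp (-(1/2) * ((z - μ) ⬝ᵥ A.mulVec (z - μ))) := by
          rw [Real.exp_add]; ring
  have hint : (∫ z : Fin s → ℝ,
      Real.exp (-((x - z) ⬝ᵥ (x - z)) / ε) *
        (C0 * Real.exp (-(1/2) * ((z - m) ⬝ᵥ S⁻¹.mulVec (z - m)))))
      = (C0 * Real.exp K) * (Real.sqrt (2 * π) ^ s / Real.sqrt A.det) := by
    simp_rw [hpt]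
    rw [MeasureTheory.integral_const_mul]
    congr 1
    have := MeasureTheory.integral_sub_right_eq_self (μ := (volume : Measure (Fin s → ℝ)))
      (fun w : Fin s → ℝ => Real.exp (-(1/2) * (w ⬝ᵥ A.mulVec w))) μ
    rw [this, gauss_quad s A hApos]
  rw [hint]
  -- now the log computation
  have hAdet : 0 < A.det := hApos.det_pos
  have hDpos : 0 < (S + (ε / 2) • (1 : Matrix (Fin s) (Fin s) ℝ)).det := by
    refine Matrix.PosDef.det_pos ?_
    refine Matrix.PosDef.add_posSemidef hS ?_
    rw [Matrix.smul_one_eq_diagonal]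
    exact Matrix.PosSemidef.diagonal (fun i => by positivity)
  have hSA : S.det * A.det = (2/ε) ^ s *
      (S + (ε / 2) • (1 : Matrix (Fin s) (Fin s) ℝ)).det := by
    rw [← Matrix.det_mul]
    have hmul : S * A = (2/ε) • (S + (ε / 2) • (1 : Matrix (Fin s) (Fin s) ℝ)) := by
      rw [hA, Matrix.mul_add, Matrix.mul_nonsing_inv _ (isUnit_iff_ne_zero.2 hSdet.ne'),
        Matrix.mul_smul, Matrix.mul_one, smul_add, smul_smul,
        show (2/ε) * (ε/2) = 1 by field_simp, one_smul, add_comm]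
    rw [hmul, Matrix.det_smul, Fintype.card_fin]
  have hlogA : Real.log S.det + Real.log A.det
      = s * Real.log (2/ε) + Real.log (S + (ε / 2) • (1 : Matrix (Fin s) (Fin s) ℝ)).det := by
    rw [← Real.log_mul hSdet.ne' hAdet.ne', hSA,
      Real.log_mul (by positivity) hDpos.ne', Real.log_pow]
  have hlog2ε : Real.log (2/ε) = -Real.log (ε/2) := by
    rw [show (2/ε) = (ε/2)⁻¹ by rw [inv_div], Real.log_inv]
  rw [Real.log_mul (by positivity) (by positivity), Real.log_mul hC0pos.ne' (Real.exp_pos _).ne',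
    Real.log_exp, Real.log_div (by positivity) (Real.sqrt_pos.2 hAdet).ne', Real.log_pow,
    hC0, Real.log_inv, Real.log_sqrt (by positivity), Real.log_sqrt hAdet.le,
    Real.log_mul (by positivity) hSdet.ne', Real.log_pow, Real.log_sqrt hpi.le, hK]
  have h1 : (1/ε) * q = (1/ε) * ((x + (ε / 2) • S⁻¹.mulVec m) ⬝ᵥ
      (((1 : Matrix (Fin s) (Fin s) ℝ) + (ε / 2) • S⁻¹)⁻¹).mulVec
        (x + (ε / 2) • S⁻¹.mulVec m)) := by rw [hq, hv, hM]
  rw [hlog2ε] at hlogA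
  linarith [hlogA]

theorem sinkhorn_feasibility_condition
    {s : ℕ} (S : Matrix (Fin s) (Fin s) ℝ) (hS : S.PosDef) (hSs : S.IsSymm)
    (m : Fin s → ℝ) (ε : ℝ) (hε : 0 < ε) (ρ : ℝ) (hρ : 0 ≤ ρ)
    (n : ℕ) (hn : 0 < n) (ξ : Fin n → Fin s → ℝ) :
    (0 ≤ ρ + ε * ((n : ℝ)⁻¹ * ∑ i : Fin n, Real.log
        (∫ z : Fin s → ℝ,
          Real.exp (-((ξ i - z) ⬝ᵥ (ξ i - z)) / ε) *
            ((Real.sqrt ((2 * π) ^ s * S.det))⁻¹ *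
              Real.exp (-(1/2) * ((z - m) ⬝ᵥ S⁻¹.mulVec (z - m))))))) ↔
    ((ε / 2) * Real.log ((S + (ε / 2) • (1 : Matrix (Fin s) (Fin s) ℝ)).det)
        - (ε * s / 2) * Real.log (ε / 2)
        + (ε / 2) * (m ⬝ᵥ S⁻¹.mulVec m)
        + (n : ℝ)⁻¹ * ∑ i : Fin n,
            ((ξ i ⬝ᵥ ξ i) -
              (ξ i + (ε / 2) • S⁻¹.mulVec m) ⬝ᵥ
                (((1 : Matrix (Fin s) (Fin s) ℝ) + (ε / 2) • S⁻¹)⁻¹).mulVec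
                  (ξ i + (ε / 2) • S⁻¹.mulVec m))
      ≤ ρ) := by
  have hn' : (n : ℝ) ≠ 0 := Nat.cast_ne_zero.2 hn.ne'
  have hsum : ∑ i : Fin n, Real.log
        (∫ z : Fin s → ℝ,
          Real.exp (-((ξ i - z) ⬝ᵥ (ξ i - z)) / ε) *
            ((Real.sqrt ((2 * π) ^ s * S.det))⁻¹ *
              Real.exp (-(1/2) * ((z - m) ⬝ᵥ S⁻¹.mulVec (z - m)))))
      = (n : ℝ) * ((s / 2 : ℝ) * Real.log (ε / 2)
          - (1/2) * Real.log ((S + (ε / 2) • (1 : Matrix (Fin s) (Fin s) ℝ)).det)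
          - (1/2) * (m ⬝ᵥ S⁻¹.mulVec m))
        + (1/ε) * ∑ i : Fin n,
            (((ξ i + (ε / 2) • S⁻¹.mulVec m) ⬝ᵥ
                (((1 : Matrix (Fin s) (Fin s) ℝ) + (ε / 2) • S⁻¹)⁻¹).mulVec
                  (ξ i + (ε / 2) • S⁻¹.mulVec m)) - (ξ i ⬝ᵥ ξ i)) := by
    calc (∑ i : Fin n, Real.log
        (∫ z : Fin s → ℝ,
          Real.exp (-((ξ i - z) ⬝ᵥ (ξ i - z)) / ε) *
            ((Real.sqrt ((2 * π) ^ s * S.det))⁻¹ *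
              Real.exp (-(1/2) * ((z - m) ⬝ᵥ S⁻¹.mulVec (z - m))))))
        = ∑ i : Fin n, (((s / 2 : ℝ) * Real.log (ε / 2)
            - (1/2) * Real.log ((S + (ε / 2) • (1 : Matrix (Fin s) (Fin s) ℝ)).det)
            - (1/2) * (m ⬝ᵥ S⁻¹.mulVec m))
          + (1/ε) * (((ξ i + (ε / 2) • S⁻¹.mulVec m) ⬝ᵥ
              (((1 : Matrix (Fin s) (Fin s) ℝ) + (ε / 2) • S⁻¹)⁻¹).mulVec
                (ξ i + (ε / 2) • S⁻¹.mulVec m)) - (ξ i ⬝ᵥ ξ i))) := by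
          refine Finset.sum_congr rfl fun i _ => ?_
          rw [inner_log S hS hSs m hε (ξ i)]
          ring
      _ = _ := by
          rw [Finset.sum_add_distrib, Finset.sum_const, Finset.card_univ, Fintype.card_fin,
            ← Finset.mul_sum, nsmul_eq_mul]
  have hneg : ∑ i : Fin n,
        ((ξ i ⬝ᵥ ξ i) -
          (ξ i + (ε / 2) • S⁻¹.mulVec m) ⬝ᵥ
            (((1 : Matrix (Fin s) (Fin s) ℝ) + (ε / 2) • S⁻¹)⁻¹).mulVec
              (ξ i + (ε / 2) • S⁻¹.mulVec m))
      = -∑ i : Fin n,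
          (((ξ i + (ε / 2) • S⁻¹.mulVec m) ⬝ᵥ
              (((1 : Matrix (Fin s) (Fin s) ℝ) + (ε / 2) • S⁻¹)⁻¹).mulVec
                (ξ i + (ε / 2) • S⁻¹.mulVec m)) - (ξ i ⬝ᵥ ξ i)) := by
    rw [← Finset.sum_neg_distrib]
    exact Finset.sum_congr rfl fun i _ => by ring
  have key : ε * ((n : ℝ)⁻¹ * ∑ i : Fin n, Real.log
        (∫ z : Fin s → ℝ,
          Real.exp (-((ξ i - z) ⬝ᵥ (ξ i - z)) / ε) *
            ((Real.sqrt ((2 * π) ^ s * S.det))⁻¹ *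
              Real.exp (-(1/2) * ((z - m) ⬝ᵥ S⁻¹.mulVec (z - m))))))
      = -((ε / 2) * Real.log ((S + (ε / 2) • (1 : Matrix (Fin s) (Fin s) ℝ)).det)
          - (ε * s / 2) * Real.log (ε / 2)
          + (ε / 2) * (m ⬝ᵥ S⁻¹.mulVec m)
          + (n : ℝ)⁻¹ * ∑ i : Fin n,
              ((ξ i ⬝ᵥ ξ i) -
                (ξ i + (ε / 2) • S⁻¹.mulVec m) ⬝ᵥ
                  (((1 : Matrix (Fin s) (Fin s) ℝ) + (ε / 2) • S⁻¹)⁻¹).mulVec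
                    (ξ i + (ε / 2) • S⁻¹.mulVec m))) := by
    rw [hsum, hneg]
    field_simp
    ring
  rw [key]
  constructor <;> intro h <;> linarith
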